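/- Let Γ be an m×m real symmetric positive definite matrix, let U be an m×m real matrix with Uᵀ Γ⁻¹ U = I, and let Λ = diag(λ₁, …, λ_m) with λ₁ ≥ λ₂ ≥ … ≥ λ_m ≥ 0. Set F_ss := Γ⁻¹ U Λ Uᵀ Γ⁻¹ + Γ⁻¹, so that F_ss⁻¹ = Γ − U D Uᵀ with D = diag(λᵢ/(1+λᵢ)). For 1 ≤ k < m let U_k be the m×k matrix of the first k columns of U and D_k = diag(λ₁/(1+λ₁), …, λ_k/(1+λ_k)). Then for M = Γ and for M = Γ⁻¹, the truncation error satisfies ‖F_ss⁻¹ − (Γ − U_k D_k U_kᵀ)‖_M ≤ (λ_{k+1}/(1 + λ_{k+1})) ‖Γ‖₂. -/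

import Mathlib

open Matrix
open scoped RealInnerProductSpace

/-- The vector `M`-norm `‖x‖_M = √(xᵀ M x)`. -/
noncomputable def vecMNorm {m : ℕ} (M : Matrix (Fin m) (Fin m) ℝ) (x : Fin m → ℝ) : ℝ :=
  Real.sqrt (x ⬝ᵥ (M *ᵥ x))

/-- The induced matrix `M`-norm `‖A‖_M = sup_{x ≠ 0} ‖A x‖_M / ‖x‖_M`. -/
noncomputable def matMNorm {m : ℕ} (M A : Matrix (Fin m) (Fin m) ℝ) : ℝ :=
  ⨆ x : {x : Fin m → ℝ // x ≠ 0}, vecMNorm M (A *ᵥ (x : Fin m → ℝ)) / vecMNorm M (x : Fin m → ℝ)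

/-- The spectral norm (operator norm induced by the Euclidean vector norm). -/
noncomputable def specNorm {m : ℕ} (A : Matrix (Fin m) (Fin m) ℝ) : ℝ :=
  ‖Matrix.toEuclideanCLM (𝕜 := ℝ) A‖

namespace Stmt4Aux

lemma psd_symm {m : ℕ} {G : Matrix (Fin m) (Fin m) ℝ} (hG : G.IsHermitian)
    (a b : Fin m → ℝ) : a ⬝ᵥ G *ᵥ b = b ⬝ᵥ G *ᵥ a := by
  have hT : Gᵀ = G := by
    have := hG.eq
    rw [Matrix.conjTranspose] at this
    exact (Matrix.conjTranspose_eq_transpose_of_trivial G).symm.trans hG.eq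
  rw [dotProduct_mulVec, ← mulVec_transpose, hT, dotProduct_comm]

/-- Cauchy–Schwarz for positive semidefinite matrices. -/
lemma psd_cs {m : ℕ} {G : Matrix (Fin m) (Fin m) ℝ} (hG : G.PosSemidef)
    (u v : Fin m → ℝ) :
    (u ⬝ᵥ G *ᵥ v) ^ 2 ≤ (u ⬝ᵥ G *ᵥ u) * (v ⬝ᵥ G *ᵥ v) := by
  have key : ∀ t : ℝ, 0 ≤ (u ⬝ᵥ G *ᵥ u) * (t * t) + (2 * (u ⬝ᵥ G *ᵥ v)) * t + (v ⬝ᵥ G *ᵥ v) := by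
    intro t
    have h := hG.dotProduct_mulVec_nonneg (t • u + v)
    simp only [star_trivial, mulVec_add, mulVec_smul, dotProduct_add, add_dotProduct,
      dotProduct_smul, smul_dotProduct, smul_eq_mul] at h
    rw [psd_symm hG.1 v u] at h
    nlinarith [h]
  have := discrim_le_zero key
  rw [discrim] at this
  nlinarith [this]

/-- Quadratic form is bounded by the spectral norm. -/
lemma quad_le_spec {m : ℕ} (Γ : Matrix (Fin m) (Fin m) ℝ) (x : Fin m → ℝ) :
    x ⬝ᵥ Γ *ᵥ x ≤ specNorm Γ * (x ⬝ᵥ x) := by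
  have h1 : x ⬝ᵥ Γ *ᵥ x =
      ⟪(Matrix.toEuclideanCLM (𝕜 := ℝ) Γ) ((WithLp.equiv 2 _).symm x),
        ((WithLp.equiv 2 _).symm x : EuclideanSpace ℝ (Fin m))⟫ := by
    rw [WithLp.equiv_symm_apply, Matrix.toEuclideanCLM_toLp]
    simp [PiLp.inner_apply, PiLp.toLp_apply, dotProduct, mul_comm]
  have h2 : x ⬝ᵥ x =
      ⟪((WithLp.equiv 2 _).symm x : EuclideanSpace ℝ (Fin m)),
        ((WithLp.equiv 2 _).symm x : EuclideanSpace ℝ (Fin m))⟫ := by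
    simp only [WithLp.equiv_symm_apply, PiLp.inner_apply, PiLp.toLp_apply, dotProduct, RCLike.inner_apply, conj_trivial, mul_comm]
  rw [h1, h2, real_inner_self_eq_norm_sq]
  calc ⟪(Matrix.toEuclideanCLM (𝕜 := ℝ) Γ) ((WithLp.equiv 2 _).symm x),
        ((WithLp.equiv 2 _).symm x : EuclideanSpace ℝ (Fin m))⟫
      ≤ ‖(Matrix.toEuclideanCLM (𝕜 := ℝ) Γ) ((WithLp.equiv 2 _).symm x)‖ *
          ‖((WithLp.equiv 2 _).symm x : EuclideanSpace ℝ (Fin m))‖ := real_inner_le_norm _ _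
    _ ≤ (specNorm Γ * ‖((WithLp.equiv 2 _).symm x : EuclideanSpace ℝ (Fin m))‖) *
          ‖((WithLp.equiv 2 _).symm x : EuclideanSpace ℝ (Fin m))‖ := by
        gcongr
        exact (Matrix.toEuclideanCLM (𝕜 := ℝ) Γ).le_opNorm _
    _ = specNorm Γ * ‖((WithLp.equiv 2 _).symm x : EuclideanSpace ℝ (Fin m))‖ ^ 2 := by ring

lemma dot_mulVec_mulVec {m : ℕ} (C D : Matrix (Fin m) (Fin m) ℝ) (z y : Fin m → ℝ) :
    (C *ᵥ z) ⬝ᵥ (D *ᵥ y) = z ⬝ᵥ ((Cᵀ * D) *ᵥ y) := by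
  rw [dotProduct_mulVec, dotProduct_mulVec, ← vecMul_vecMul, vecMul_transpose]

lemma dotProduct_self_nonneg' {m : ℕ} (v : Fin m → ℝ) : 0 ≤ v ⬝ᵥ v :=
  Finset.sum_nonneg fun i _ => mul_self_nonneg _

end Stmt4Aux

open Stmt4Aux

theorem stmt_4 {m k : ℕ} (Γ U : Matrix (Fin m) (Fin m) ℝ) (lam : Fin m → ℝ)
    (hΓ : Γ.PosDef) (hU : Uᵀ * Γ⁻¹ * U = 1)
    (hdec : ∀ i j : Fin m, i ≤ j → lam j ≤ lam i) (hnonneg : ∀ i, 0 ≤ lam i)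
    (hk1 : 1 ≤ k) (hk : k < m) :
    ∀ M : Matrix (Fin m) (Fin m) ℝ, (M = Γ ∨ M = Γ⁻¹) →
      matMNorm M
        ((Γ⁻¹ * U * Matrix.diagonal lam * Uᵀ * Γ⁻¹ + Γ⁻¹)⁻¹ -
          (Γ - (U.submatrix id (Fin.castLE hk.le)) *
            Matrix.diagonal (fun i : Fin k => lam (Fin.castLE hk.le i) / (1 + lam (Fin.castLE hk.le i))) *
            (U.submatrix id (Fin.castLE hk.le))ᵀ)) ≤
        (lam ⟨k, hk⟩ / (1 + lam ⟨k, hk⟩)) * specNorm Γ := by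
  intro M hM
  have hΓinv : Γ⁻¹.PosDef := hΓ.inv
  have hdet : IsUnit Γ.det := isUnit_iff_ne_zero.2 hΓ.det_pos.ne'
  have hGi : Γ⁻¹ * Γ = 1 := nonsing_inv_mul Γ hdet
  have hGi' : Γ * Γ⁻¹ = 1 := mul_nonsing_inv Γ hdet
  have hΓT : Γᵀ = Γ := by
    have := hΓ.1.eq
    rw [Matrix.conjTranspose] at this
    exact (Matrix.conjTranspose_eq_transpose_of_trivial Γ).symm.trans hΓ.1.eq
  have hΓiT : Γ⁻¹ᵀ = Γ⁻¹ := by rw [transpose_nonsing_inv, hΓT]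
  -- the diagonal entries
  set d : Fin m → ℝ := fun i => lam i / (1 + lam i) with hd
  have hden : ∀ i, (0:ℝ) < 1 + lam i := fun i => by have := hnonneg i; linarith
  have hd0 : ∀ i, 0 ≤ d i := fun i => div_nonneg (hnonneg i) (hden i).le
  set c : ℝ := lam ⟨k, hk⟩ / (1 + lam ⟨k, hk⟩) with hc
  have hc0 : 0 ≤ c := hd0 _
  set e : Fin m → ℝ := fun i => if (i : ℕ) < k then 0 else d i with he
  have he_le : ∀ i, e i ≤ c := by
    intro i
    by_cases hik : (i : ℕ) < k
    · simp [he, hik, hc0]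
    · push_neg at hik
      have hle : lam i ≤ lam ⟨k, hk⟩ := hdec ⟨k, hk⟩ i hik
      simp only [he, hik, if_neg (not_lt.2 hik)]
      rw [hd, hc]
      rw [div_le_div_iff₀ (hden i) (hden ⟨k, hk⟩)]
      nlinarith [hnonneg i, hnonneg ⟨k, hk⟩]
  have he0 : ∀ i, 0 ≤ e i := by
    intro i
    by_cases hik : (i : ℕ) < k
    · simp [he, hik]
    · simp only [he, if_neg hik]; exact hd0 i
  -- Step 1 : the inverse formula
  have hdiag0 : Matrix.diagonal lam - Matrix.diagonal lam * Matrix.diagonal d -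
      Matrix.diagonal d = 0 := by
    ext i j
    by_cases hij : i = j
    · subst hij
      have h := (hden i).ne'
      simp only [Matrix.sub_apply, Matrix.diagonal_mul_diagonal, Matrix.diagonal_apply_eq,
        Matrix.zero_apply, hd]
      field_simp
      ring
    · simp [Matrix.sub_apply, Matrix.diagonal_mul_diagonal, Matrix.diagonal_apply_ne _ hij]
  have key : (Γ⁻¹ * U * Matrix.diagonal lam * Uᵀ * Γ⁻¹ + Γ⁻¹) *
      (Γ - U * Matrix.diagonal d * Uᵀ) = 1 := by
    have expand : (Γ⁻¹ * U * Matrix.diagonal lam * Uᵀ * Γ⁻¹ + Γ⁻¹) *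
        (Γ - U * Matrix.diagonal d * Uᵀ)
        = Γ⁻¹ * U * Matrix.diagonal lam * (Uᵀ * (Γ⁻¹ * Γ))
          - Γ⁻¹ * U * (Matrix.diagonal lam * ((Uᵀ * Γ⁻¹ * U) * Matrix.diagonal d)) * Uᵀ
          + Γ⁻¹ * Γ - Γ⁻¹ * (U * Matrix.diagonal d * Uᵀ) := by
      noncomm_ring
    rw [expand, hU, hGi]
    have collect : Γ⁻¹ * U * Matrix.diagonal lam * (Uᵀ * 1)
          - Γ⁻¹ * U * (Matrix.diagonal lam * (1 * Matrix.diagonal d)) * Uᵀ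
          + 1 - Γ⁻¹ * (U * Matrix.diagonal d * Uᵀ)
        = Γ⁻¹ * U * (Matrix.diagonal lam - Matrix.diagonal lam * Matrix.diagonal d
            - Matrix.diagonal d) * Uᵀ + 1 := by
      noncomm_ring
    rw [collect, hdiag0]
    simp
  have hinv : (Γ⁻¹ * U * Matrix.diagonal lam * Uᵀ * Γ⁻¹ + Γ⁻¹)⁻¹ =
      Γ - U * Matrix.diagonal d * Uᵀ := inv_eq_right_inv key
  -- Step 2 : the truncated part as a full-size product
  set dh : Fin m → ℝ := fun i => if (i : ℕ) < k then d i else 0 with hdh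
  have hsub : (U.submatrix id (Fin.castLE hk.le)) *
      Matrix.diagonal (fun i : Fin k => lam (Fin.castLE hk.le i) / (1 + lam (Fin.castLE hk.le i))) *
      (U.submatrix id (Fin.castLE hk.le))ᵀ = U * Matrix.diagonal dh * Uᵀ := by
    ext i j
    simp only [Matrix.mul_apply, Matrix.diagonal_apply, Matrix.transpose_apply,
      Matrix.submatrix_apply, id, ite_mul, zero_mul, mul_ite, mul_zero,
      Finset.sum_ite_eq, Finset.sum_ite_eq', Finset.mem_univ, if_true]
    calc ∑ b : Fin k, U i (Fin.castLE hk.le b) *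
            (lam (Fin.castLE hk.le b) / (1 + lam (Fin.castLE hk.le b))) * U j (Fin.castLE hk.le b)
        = ∑ b : Fin k, U i ((Fin.castLEEmb hk.le) b) * dh ((Fin.castLEEmb hk.le) b) *
            U j ((Fin.castLEEmb hk.le) b) := by
          apply Finset.sum_congr rfl
          intro b _
          have hb : ((Fin.castLE hk.le b : Fin m) : ℕ) < k := b.isLt
          simp [Fin.castLEEmb, hdh, hb, hd]
      _ = ∑ a ∈ Finset.univ.map (Fin.castLEEmb hk.le), U i a * dh a * U j a :=
          (Finset.sum_map Finset.univ (Fin.castLEEmb hk.le)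
            (fun a => U i a * dh a * U j a)).symm
      _ = ∑ a : Fin m, U i a * dh a * U j a := by
          apply Finset.sum_subset (Finset.subset_univ _)
          intro a _ ha
          have hak : ¬ ((a : ℕ) < k) := by
            intro hak
            exact ha (Finset.mem_map.2 ⟨⟨(a : ℕ), hak⟩, Finset.mem_univ _, by
              simp [Fin.castLEEmb, Fin.castLE, Fin.ext_iff]⟩)
          simp [hdh, hak]
  have hediag : Matrix.diagonal dh - Matrix.diagonal d = -(Matrix.diagonal e) := by
    ext i j
    by_cases hij : i = j
    · subst hij
      by_cases hik : (i : ℕ) < k <;> simp [hdh, he, hik]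
    · simp [Matrix.diagonal_apply_ne _ hij]
  have hdiff : (Γ - U * Matrix.diagonal d * Uᵀ) -
      (Γ - U * Matrix.diagonal dh * Uᵀ) = -(U * Matrix.diagonal e * Uᵀ) := by
    have step : (Γ - U * Matrix.diagonal d * Uᵀ) - (Γ - U * Matrix.diagonal dh * Uᵀ)
        = U * (Matrix.diagonal dh - Matrix.diagonal d) * Uᵀ := by noncomm_ring
    rw [step, hediag]
    noncomm_ring
  rw [hinv, hsub, hdiff]
  -- Step 3 : the norm bound
  have hMpd : M.PosDef := by rcases hM with h | h <;> simp [h, hΓ, hΓinv]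
  -- quadratic-form facts
  have P5 : ∀ v : Fin m → ℝ, (U *ᵥ v) ⬝ᵥ Γ⁻¹ *ᵥ (U *ᵥ v) = v ⬝ᵥ v := by
    intro v
    rw [mulVec_mulVec, dot_mulVec_mulVec, ← Matrix.mul_assoc, hU]
    simp
  have P1 : ∀ z : Fin m → ℝ, (Uᵀ *ᵥ z) ⬝ᵥ (Uᵀ *ᵥ z) ≤ z ⬝ᵥ Γ *ᵥ z := by
    intro z
    set y := Uᵀ *ᵥ z with hy
    have cs := psd_cs hΓinv.posSemidef (Γ *ᵥ z) (U *ᵥ y)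
    have t1 : (Γ *ᵥ z) ⬝ᵥ Γ⁻¹ *ᵥ (U *ᵥ y) = y ⬝ᵥ y := by
      rw [mulVec_mulVec, dot_mulVec_mulVec, hΓT, ← Matrix.mul_assoc, hGi', Matrix.one_mul]
      rw [dotProduct_mulVec, ← mulVec_transpose, ← hy]
    have t2 : (Γ *ᵥ z) ⬝ᵥ Γ⁻¹ *ᵥ (Γ *ᵥ z) = z ⬝ᵥ Γ *ᵥ z := by
      rw [mulVec_mulVec, dot_mulVec_mulVec, hΓT, ← Matrix.mul_assoc, hGi', Matrix.one_mul]
    have t3 : (U *ᵥ y) ⬝ᵥ Γ⁻¹ *ᵥ (U *ᵥ y) = y ⬝ᵥ y := P5 y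
    rw [t1, t2, t3] at cs
    have hyy : 0 ≤ y ⬝ᵥ y := dotProduct_self_nonneg' y
    rcases eq_or_lt_of_le hyy with h0 | h0
    · rw [← h0]
      have := hΓ.posSemidef.dotProduct_mulVec_nonneg z
      simpa using this
    · nlinarith [cs, h0]
  have P3 : ∀ z : Fin m → ℝ, z ⬝ᵥ z ≤ specNorm Γ * (z ⬝ᵥ Γ⁻¹ *ᵥ z) := by
    intro z
    have cs := psd_cs hΓ.posSemidef z (Γ⁻¹ *ᵥ z)
    have t1 : z ⬝ᵥ Γ *ᵥ (Γ⁻¹ *ᵥ z) = z ⬝ᵥ z := by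
      rw [mulVec_mulVec, hGi']
      simp
    have t2 : (Γ⁻¹ *ᵥ z) ⬝ᵥ Γ *ᵥ (Γ⁻¹ *ᵥ z) = z ⬝ᵥ Γ⁻¹ *ᵥ z := by
      rw [mulVec_mulVec, dot_mulVec_mulVec, hΓiT, hGi', Matrix.mul_one]
    rw [t1, t2] at cs
    have h2 := quad_le_spec Γ z
    have hzz : 0 ≤ z ⬝ᵥ z := dotProduct_self_nonneg' z
    have hzi : 0 ≤ z ⬝ᵥ Γ⁻¹ *ᵥ z := by simpa using hΓinv.posSemidef.dotProduct_mulVec_nonneg z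
    have hspec : 0 ≤ specNorm Γ := norm_nonneg _
    rcases eq_or_lt_of_le hzz with h0 | h0
    · rw [← h0]; positivity
    · nlinarith [cs, h2, h0, hzi, hspec]
  have P4 : ∀ y : Fin m → ℝ,
      (Matrix.diagonal e *ᵥ y) ⬝ᵥ (Matrix.diagonal e *ᵥ y) ≤ c ^ 2 * (y ⬝ᵥ y) := by
    intro y
    simp only [dotProduct, mulVec_diagonal, Finset.mul_sum]
    apply Finset.sum_le_sum
    intro i _
    have h1 := he_le i
    have h2 := he0 i
    nlinarith [mul_self_nonneg (y i), mul_le_mul h1 h1 h2 hc0]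
  -- the sup bound
  have hne : Nonempty {x : Fin m → ℝ // x ≠ 0} := by
    refine ⟨⟨fun _ => 1, ?_⟩⟩
    intro h
    have := congrFun h ⟨0, by omega⟩
    simpa using this
  rw [matMNorm]
  apply ciSup_le
  rintro ⟨x, hx⟩
  have hxpos : 0 < x ⬝ᵥ M *ᵥ x := by
    have := hMpd.dotProduct_mulVec_pos hx
    simpa using this
  have hdenpos : 0 < vecMNorm M x := Real.sqrt_pos.2 hxpos
  rw [div_le_iff₀ hdenpos]
  -- remove the minus sign
  have hneg : vecMNorm M ((-(U * Matrix.diagonal e * Uᵀ)) *ᵥ x) =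
      vecMNorm M ((U * Matrix.diagonal e * Uᵀ) *ᵥ x) := by
    rw [vecMNorm, vecMNorm, neg_mulVec]
    simp [mulVec_neg, dotProduct_neg, neg_dotProduct]
  rw [hneg]
  set y := Uᵀ *ᵥ x with hy
  set z := Matrix.diagonal e *ᵥ y with hz
  set w := U *ᵥ z with hw
  have hwx : (U * Matrix.diagonal e * Uᵀ) *ᵥ x = w := by
    rw [hw, hz, hy, mulVec_mulVec, mulVec_mulVec]
  rw [hwx]
  have hspec : 0 ≤ specNorm Γ := norm_nonneg _
  have hkey : w ⬝ᵥ M *ᵥ w ≤ (c * specNorm Γ) ^ 2 * (x ⬝ᵥ M *ᵥ x) := by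
    have f4 : z ⬝ᵥ z ≤ c ^ 2 * (y ⬝ᵥ y) := P4 y
    have f5 : w ⬝ᵥ Γ⁻¹ *ᵥ w = z ⬝ᵥ z := P5 z
    have f1 : y ⬝ᵥ y ≤ x ⬝ᵥ Γ *ᵥ x := P1 x
    have hyy : 0 ≤ y ⬝ᵥ y := dotProduct_self_nonneg' y
    have hzz : 0 ≤ z ⬝ᵥ z := dotProduct_self_nonneg' z
    have hww : 0 ≤ w ⬝ᵥ w := dotProduct_self_nonneg' w
    have hxG : 0 ≤ x ⬝ᵥ Γ *ᵥ x := by simpa using hΓ.posSemidef.dotProduct_mulVec_nonneg x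
    have hxGi : 0 ≤ x ⬝ᵥ Γ⁻¹ *ᵥ x := by simpa using hΓinv.posSemidef.dotProduct_mulVec_nonneg x
    rcases hM with h | h <;> rw [h]
    · -- M = Γ
      have s1 : w ⬝ᵥ Γ *ᵥ w ≤ specNorm Γ * (w ⬝ᵥ w) := quad_le_spec Γ w
      have s2 : w ⬝ᵥ w ≤ specNorm Γ * (w ⬝ᵥ Γ⁻¹ *ᵥ w) := P3 w
      calc w ⬝ᵥ Γ *ᵥ w ≤ specNorm Γ * (w ⬝ᵥ w) := s1
        _ ≤ specNorm Γ * (specNorm Γ * (w ⬝ᵥ Γ⁻¹ *ᵥ w)) :=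
            mul_le_mul_of_nonneg_left s2 hspec
        _ = specNorm Γ ^ 2 * (z ⬝ᵥ z) := by rw [f5]; ring
        _ ≤ specNorm Γ ^ 2 * (c ^ 2 * (y ⬝ᵥ y)) :=
            mul_le_mul_of_nonneg_left f4 (by positivity)
        _ ≤ specNorm Γ ^ 2 * (c ^ 2 * (x ⬝ᵥ Γ *ᵥ x)) := by
            apply mul_le_mul_of_nonneg_left _ (by positivity)
            exact mul_le_mul_of_nonneg_left f1 (by positivity)
        _ = (c * specNorm Γ) ^ 2 * (x ⬝ᵥ Γ *ᵥ x) := by ring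
    · -- M = Γ⁻¹
      have s2 : x ⬝ᵥ Γ *ᵥ x ≤ specNorm Γ * (x ⬝ᵥ x) := quad_le_spec Γ x
      have s3 : x ⬝ᵥ x ≤ specNorm Γ * (x ⬝ᵥ Γ⁻¹ *ᵥ x) := P3 x
      calc w ⬝ᵥ Γ⁻¹ *ᵥ w = z ⬝ᵥ z := f5
        _ ≤ c ^ 2 * (y ⬝ᵥ y) := f4
        _ ≤ c ^ 2 * (x ⬝ᵥ Γ *ᵥ x) := mul_le_mul_of_nonneg_left f1 (by positivity)
        _ ≤ c ^ 2 * (specNorm Γ * (x ⬝ᵥ x)) := mul_le_mul_of_nonneg_left s2 (by positivity)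
        _ ≤ c ^ 2 * (specNorm Γ * (specNorm Γ * (x ⬝ᵥ Γ⁻¹ *ᵥ x))) := by
            apply mul_le_mul_of_nonneg_left _ (by positivity)
            exact mul_le_mul_of_nonneg_left s3 hspec
        _ = (c * specNorm Γ) ^ 2 * (x ⬝ᵥ Γ⁻¹ *ᵥ x) := by ring
  calc vecMNorm M w = Real.sqrt (w ⬝ᵥ M *ᵥ w) := rfl
    _ ≤ Real.sqrt ((c * specNorm Γ) ^ 2 * (x ⬝ᵥ M *ᵥ x)) := Real.sqrt_le_sqrt hkey
    _ = (c * specNorm Γ) * Real.sqrt (x ⬝ᵥ M *ᵥ x) := by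
        rw [Real.sqrt_mul (sq_nonneg _), Real.sqrt_sq (by positivity)]
    _ = (c * specNorm Γ) * vecMNorm M x := rfl
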